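/- For every chain of subsets [n] = K_1 ⊋ K_2 ⊋ ⋯ ⊋ K_{m+1} = ∅, the set O_{K_1,…,K_{m+1}} is nonempty; hence Y_n is the disjoint union of the sets O_{K_1,…,K_{m+1}} over all such chains, and the assignment sending a T_n-orbit in Y_n to the common chain of its points is a bijection between the set of T_n-orbits in Y_n and the set of chains [n] = K_1 ⊋ K_2 ⊋ ⋯ ⊋ K_{m+1} = ∅. -/
import Mathlib


noncomputable section

open Projectivization

instance projTopology {K V : Type*} [DivisionRing K] [AddCommGroup V] [Module K V]
    [TopologicalSpace V] : TopologicalSpace (Projectivization K V) :=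
  inferInstanceAs (TopologicalSpace (Quotient (projectivizationSetoid K V)))

/-- The index type of nonempty subsets of `ι`. -/
abbrev NES (ι : Type) := {I : Set ι // I.Nonempty}

/-- The ambient product `P = ∏_{∅ ≠ I ⊆ ι} ℙ^I` of projective spaces. -/
abbrev PSp (ι : Type) := (I : NES ι) → Projectivization ℂ (↥I.1 → ℂ)

/-- The subset of `ℙ^ι` consisting of points all of whose homogeneous coordinates
are nonzero (an algebraic torus). -/
def torusSet (ι : Type) : Set (Projectivization ℂ (ι → ℂ)) := {x | ∀ i, x.rep i ≠ 0}

open Classical in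
/-- The `i`-th homogeneous coordinate (for the chosen representative `rep`) of the
`K`-component of a point `p ∈ P`; junk value `0` if `i ∉ K` or `K = ∅`. -/
def pcoord (ι : Type) (p : PSp ι) (K : Set ι) (i : ι) : ℂ :=
  if h : K.Nonempty ∧ i ∈ K then (p ⟨K, h.1⟩).rep ⟨i, h.2⟩ else 0

lemma pcoord_exists_ne (ι : Type) (p : PSp ι) (K : Set ι) (hK : K.Nonempty) :
    ∃ i, i ∈ K ∧ pcoord ι p K i ≠ 0 := by
  obtain ⟨x, hx⟩ := Function.ne_iff.mp (Projectivization.rep_nonzero (p ⟨K, hK⟩))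
  refine ⟨x.1, x.2, ?_⟩
  rw [pcoord, dif_pos ⟨hK, x.2⟩]
  simpa using hx

/-- The map `ρ` from the torus to `P`, whose `I`-component is given by restricting
the homogeneous coordinates. -/
def rho (ι : Type) (x : ↥(torusSet ι)) : PSp ι := fun I =>
  Projectivization.mk ℂ (fun i : ↥I.1 => x.1.rep i.1) <| by
    obtain ⟨i, hi⟩ := I.2
    intro h0
    exact x.2 i (by simpa using congrFun h0 ⟨i, hi⟩)

/-- `Y`, the closure of `ρ(T)` in `P`. -/
def Yn (ι : Type) : Set (PSp ι) := closure (Set.range (rho ι))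

/-- The chain of a point `p ∈ P`: `chainK ι p 0 = univ` (this is `K₁` in the paper)
and `chainK ι p (ℓ+1)` (i.e. `K_{ℓ+2}`) consists of those `k ∈ chainK ι p ℓ` for which the
`k`-th homogeneous coordinate of the `chainK ι p ℓ`-component of `p` vanishes. -/
def chainK (ι : Type) (p : PSp ι) : ℕ → Set ι
  | 0 => Set.univ
  | ℓ + 1 => {k ∈ chainK ι p ℓ | pcoord ι p (chainK ι p ℓ) k = 0}

/-- A chain of subsets `ι = K 0 ⊋ K 1 ⊋ ⋯ ⊋ K m = ∅` (written `K₁ ⊋ ⋯ ⊋ K_{m+1}` in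
the paper); we extend it by `∅` beyond the `m`-th step so that it is determined by
the function `K`. -/
structure SubsetChain (ι : Type) where
  m : ℕ
  K : ℕ → Set ι
  first : K 0 = Set.univ
  strict : ∀ ℓ < m, K (ℓ + 1) ⊂ K ℓ
  last : K m = ∅
  beyond : ∀ ℓ, m ≤ ℓ → K ℓ = ∅

/-- The piece `O_{K₁,…,K_{m+1}}` of `Y`: those points of `Y` whose chain is the given one. -/
def Ochain (ι : Type) (c : SubsetChain ι) : Set (PSp ι) :=
  {p ∈ Yn ι | ∀ ℓ ≤ c.m, chainK ι p ℓ = c.K ℓ}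

/-- The subset `D_{K₁,…,K_{m+1}}` of `Y`: the points whose `K_ℓ`-component has vanishing
coordinates indexed by `K_{ℓ+1}`. -/
def Dchain (ι : Type) (c : SubsetChain ι) : Set (PSp ι) :=
  {p ∈ Yn ι | ∀ ℓ < c.m, ∀ k ∈ c.K (ℓ + 1), pcoord ι p (c.K ℓ) k = 0}

/-- The action of an element of the torus on a point of `P`:
`[a]·([b_i]_{i ∈ I})_I = ([a_i b_i]_{i ∈ I})_I`. -/
def act (ι : Type) (t : ↥(torusSet ι)) (p : PSp ι) : PSp ι := fun I =>
  Projectivization.mk ℂ (fun i : ↥I.1 => t.1.rep i.1 * (p I).rep i) <| by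
    intro h0
    obtain ⟨i, hi⟩ := Function.ne_iff.mp (Projectivization.rep_nonzero (p I))
    have h : t.1.rep i.1 * (p I).rep i = 0 := by simpa using congrFun h0 i
    exact mul_ne_zero (t.2 i.1) (by simpa using hi) h

/-- The action of a permutation `w` of `ι` on `P`: the `w(I)`-component of `w·p` is
`[a^I_{w⁻¹(j)}]_{j ∈ w(I)}`; equivalently the `J`-component of `w·p` is
`[a^{w⁻¹(J)}_{w⁻¹(j)}]_{j ∈ J}`. -/
def permAct (ι : Type) (w : Equiv.Perm ι) (p : PSp ι) : PSp ι := fun J =>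
  Projectivization.mk ℂ (fun j : ↥J.1 => pcoord ι p (⇑(w⁻¹) '' J.1) (w⁻¹ j.1)) <| by
    have hK : ((⇑(w⁻¹) : ι → ι) '' J.1).Nonempty := J.2.image _
    obtain ⟨i, hi, hne⟩ := pcoord_exists_ne ι p _ hK
    obtain ⟨j, hj, hji⟩ := hi
    intro h0
    apply hne
    have h := congrFun h0 ⟨j, hj⟩
    simpa [hji] using h


section Topo
open Topology

variable {V : Type*} [AddCommGroup V] [Module ℂ V] [TopologicalSpace V]
  [ContinuousConstSMul ℂ V]

lemma continuous_projMk :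
    Continuous (fun v : {v : V // v ≠ 0} => Projectivization.mk ℂ v.1 v.2) :=
  continuous_quotient_mk'

omit [TopologicalSpace V] [ContinuousConstSMul ℂ V] in
lemma rep_mk_eq_smul (v : V) (hv : v ≠ 0) :
    ∃ a : ℂ, a ≠ 0 ∧ (Projectivization.mk ℂ v hv).rep = a • v := by
  have h := (Projectivization.mk_rep (Projectivization.mk ℂ v hv))
  rw [Projectivization.mk_eq_mk_iff] at h
  obtain ⟨a, ha⟩ := h
  exact ⟨(a : ℂ), a.ne_zero, ha.symm⟩

omit [TopologicalSpace V] [ContinuousConstSMul ℂ V] in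
lemma mk_smul_eq (v : V) (hv : v ≠ 0) (a : ℂ) (h' : a • v ≠ 0) :
    Projectivization.mk ℂ (a • v) h' = Projectivization.mk ℂ v hv :=
  (Projectivization.mk_eq_mk_iff' ℂ _ _ _ _).mpr ⟨a, rfl⟩

lemma isOpenMap_projMk :
    IsOpenMap (fun v : {v : V // v ≠ 0} => Projectivization.mk ℂ v.1 v.2) := by
  intro U hU
  have hσ : ∀ (a : ℂˣ) (v : {v : V // v ≠ 0}), (a : ℂ) • v.1 ≠ 0 :=
    fun a v => smul_ne_zero a.ne_zero v.2
  set σ : ℂˣ → {v : V // v ≠ 0} → {v : V // v ≠ 0} := fun a v => ⟨(a : ℂ) • v.1, hσ a v⟩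
    with hσdef
  have key : (fun v : {v : V // v ≠ 0} => Projectivization.mk ℂ v.1 v.2) ⁻¹'
      ((fun v : {v : V // v ≠ 0} => Projectivization.mk ℂ v.1 v.2) '' U) =
      ⋃ a : ℂˣ, σ a ⁻¹' U := by
    ext v
    simp only [Set.mem_preimage, Set.mem_image, Set.mem_iUnion]
    constructor
    · rintro ⟨u, hu, huv⟩
      obtain ⟨a, ha⟩ := (Projectivization.mk_eq_mk_iff ℂ _ _ _ _).mp huv
      refine ⟨a, ?_⟩
      have he : σ a v = u := Subtype.ext (by simpa [hσdef, Units.smul_def] using ha)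
      rwa [he]
    · rintro ⟨a, ha⟩
      refine ⟨σ a v, ha, ?_⟩
      exact Quotient.sound' ⟨a, rfl⟩
  have hq : IsQuotientMap (fun v : {v : V // v ≠ 0} => Projectivization.mk ℂ v.1 v.2) :=
    isQuotientMap_quotient_mk'
  rw [← hq.isOpen_preimage, key]
  exact isOpen_iUnion fun a => hU.preimage
    (Continuous.subtype_mk ((continuous_const_smul _).comp continuous_subtype_val) _)

end Topo

section Minor

lemma isClosed_minor {α β : Type} (a a' : α) (b b' : β) :
    IsClosed {xy : Projectivization ℂ (α → ℂ) × Projectivization ℂ (β → ℂ) |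
      xy.1.rep a * xy.2.rep b' = xy.1.rep a' * xy.2.rep b} := by
  rw [← isOpen_compl_iff]
  have himg : {xy : Projectivization ℂ (α → ℂ) × Projectivization ℂ (β → ℂ) |
        xy.1.rep a * xy.2.rep b' = xy.1.rep a' * xy.2.rep b}ᶜ =
      (Prod.map (fun v : {v : α → ℂ // v ≠ 0} => Projectivization.mk ℂ v.1 v.2)
          (fun v : {v : β → ℂ // v ≠ 0} => Projectivization.mk ℂ v.1 v.2)) ''
        {vw : {v : α → ℂ // v ≠ 0} × {w : β → ℂ // w ≠ 0} |
          vw.1.1 a * vw.2.1 b' ≠ vw.1.1 a' * vw.2.1 b} := by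
    ext ⟨x, y⟩
    simp only [Set.mem_compl_iff, Set.mem_setOf_eq, Set.mem_image, Prod.exists]
    constructor
    · intro h
      exact ⟨⟨x.rep, x.rep_nonzero⟩, ⟨y.rep, y.rep_nonzero⟩, h,
        by simp [Prod.map, Projectivization.mk_rep]⟩
    · rintro ⟨v, w, hvw, heq⟩
      rw [Prod.map_apply, Prod.mk.injEq] at heq
      obtain ⟨hx, hy⟩ := heq
      subst hx hy
      obtain ⟨c, hc, hcrep⟩ := rep_mk_eq_smul v.1 v.2
      obtain ⟨d, hd, hdrep⟩ := rep_mk_eq_smul w.1 w.2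
      rw [hcrep, hdrep]
      simp only [Pi.smul_apply, smul_eq_mul]
      intro hcontra
      apply hvw
      have : (c * d) * (v.1 a * w.1 b') = (c * d) * (v.1 a' * w.1 b) := by
        ring_nf
        ring_nf at hcontra
        linear_combination hcontra
      exact mul_left_cancel₀ (mul_ne_zero hc hd) this
  rw [himg]
  apply (isOpenMap_projMk.prodMap isOpenMap_projMk)
  have h1 : Continuous fun vw : {v : α → ℂ // v ≠ 0} × {w : β → ℂ // w ≠ 0} =>
      vw.1.1 a * vw.2.1 b' :=
    ((continuous_apply a).comp (continuous_subtype_val.comp continuous_fst)).mul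
      ((continuous_apply b').comp (continuous_subtype_val.comp continuous_snd))
  have h2 : Continuous fun vw : {v : α → ℂ // v ≠ 0} × {w : β → ℂ // w ≠ 0} =>
      vw.1.1 a' * vw.2.1 b :=
    ((continuous_apply a').comp (continuous_subtype_val.comp continuous_fst)).mul
      ((continuous_apply b).comp (continuous_subtype_val.comp continuous_snd))
  exact (isClosed_eq h1 h2).isOpen_compl

end Minor

section Zs

variable {ι : Type}

/-- The closed compatibility locus. -/
def Zset (ι : Type) : Set (PSp ι) :=
  ⋂ (I : NES ι) (J : NES ι) (_ : I.1 ⊆ J.1) (i : ↥I.1) (i' : ↥I.1)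
    (hi : i.1 ∈ J.1) (hi' : i'.1 ∈ J.1),
    {p | (p I).rep i * (p J).rep ⟨i'.1, hi'⟩ = (p I).rep i' * (p J).rep ⟨i.1, hi⟩}

lemma isClosed_Zset : IsClosed (Zset ι) := by
  refine isClosed_iInter fun I => isClosed_iInter fun J => isClosed_iInter fun _ =>
    isClosed_iInter fun i => isClosed_iInter fun i' => isClosed_iInter fun hi =>
    isClosed_iInter fun hi' => ?_
  have hc : Continuous fun p : PSp ι => (p I, p J) :=
    Continuous.prodMk (continuous_apply I) (continuous_apply J)
  exact (isClosed_minor i i' (⟨i.1, hi⟩ : ↥J.1) ⟨i'.1, hi'⟩).preimage hc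

lemma rep_eq_smul_of_eq_mk {V : Type*} [AddCommGroup V] [Module ℂ V]
    (x : Projectivization ℂ V) (v : V) (hv : v ≠ 0)
    (h : x = Projectivization.mk ℂ v hv) : ∃ a : ℂ, a ≠ 0 ∧ x.rep = a • v := by
  subst h; exact rep_mk_eq_smul v hv

lemma rho_mem_Zset (x : ↥(torusSet ι)) : rho ι x ∈ Zset ι := by
  refine Set.mem_iInter.mpr fun I => Set.mem_iInter.mpr fun J => Set.mem_iInter.mpr fun _ =>
    Set.mem_iInter.mpr fun i => Set.mem_iInter.mpr fun i' => Set.mem_iInter.mpr fun hi =>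
    Set.mem_iInter.mpr fun hi' => ?_
  obtain ⟨c, hc, hcrep⟩ := rep_eq_smul_of_eq_mk (rho ι x I) _ _ rfl
  obtain ⟨d, hd, hdrep⟩ := rep_eq_smul_of_eq_mk (rho ι x J) _ _ rfl
  show (rho ι x I).rep i * (rho ι x J).rep ⟨i'.1, hi'⟩
    = (rho ι x I).rep i' * (rho ι x J).rep ⟨i.1, hi⟩
  rw [hcrep, hdrep]
  simp only [Pi.smul_apply, smul_eq_mul]
  ring

lemma Yn_subset_Zset : Yn ι ⊆ Zset ι :=
  closure_minimal (Set.range_subset_iff.mpr rho_mem_Zset) isClosed_Zset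

end Zs

section Chains

variable {ι : Type}

lemma chainK_succ_subset (p : PSp ι) (ℓ : ℕ) : chainK ι p (ℓ + 1) ⊆ chainK ι p ℓ :=
  fun _ hk => hk.1

lemma chainK_antitone (p : PSp ι) : Antitone fun ℓ => chainK ι p ℓ :=
  antitone_nat_of_succ_le fun ℓ => chainK_succ_subset p ℓ

lemma chainK_ssubset (p : PSp ι) (ℓ : ℕ) (h : (chainK ι p ℓ).Nonempty) :
    chainK ι p (ℓ + 1) ⊂ chainK ι p ℓ := by
  obtain ⟨i, hi, hne⟩ := pcoord_exists_ne ι p _ h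
  exact ⟨chainK_succ_subset p ℓ, fun hsub => hne ((hsub hi).2)⟩

lemma chainK_terminates [Fintype ι] (p : PSp ι) : ∃ ℓ, chainK ι p ℓ = ∅ := by
  have key : ∀ ℓ, (chainK ι p ℓ).Nonempty → (chainK ι p ℓ).ncard + ℓ ≤ Fintype.card ι := by
    intro ℓ
    induction ℓ with
    | zero => intro _; simp [chainK, Set.ncard_univ]
    | succ ℓ ih =>
      intro h
      have h0 : (chainK ι p ℓ).Nonempty := h.mono (chainK_succ_subset p ℓ)
      have hlt : (chainK ι p (ℓ + 1)).ncard < (chainK ι p ℓ).ncard :=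
        Set.ncard_lt_ncard (chainK_ssubset p ℓ h0) (Set.toFinite _)
      have := ih h0
      omega
  refine ⟨Fintype.card ι + 1, ?_⟩
  by_contra hne
  have := key _ (Set.nonempty_iff_ne_empty.mpr hne)
  omega

open Classical in
/-- The canonical chain of a point of `P`. -/
def cOf [Fintype ι] (p : PSp ι) : SubsetChain ι where
  m := Nat.find (chainK_terminates p)
  K := chainK ι p
  first := rfl
  strict ℓ hℓ := chainK_ssubset p ℓ
    (Set.nonempty_iff_ne_empty.mpr (Nat.find_min (chainK_terminates p) hℓ))
  last := Nat.find_spec (chainK_terminates p)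
  beyond ℓ hℓ := Set.subset_empty_iff.mp
    (Nat.find_spec (chainK_terminates p) ▸ chainK_antitone p hℓ)

lemma SubsetChain.ext' {c c' : SubsetChain ι} (hm : c.m = c'.m) (hK : c.K = c'.K) : c = c' := by
  cases c; cases c'
  cases hm; cases hK
  rfl

lemma SubsetChain.antitone (c : SubsetChain ι) : Antitone c.K := by
  apply antitone_nat_of_succ_le
  intro ℓ
  rcases lt_or_ge ℓ c.m with h | h
  · exact (c.strict ℓ h).1
  · rw [c.beyond ℓ h, c.beyond (ℓ+1) (by omega)]

lemma SubsetChain.nonempty_of_lt (c : SubsetChain ι) {ℓ : ℕ} (h : ℓ < c.m) :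
    (c.K ℓ).Nonempty := by
  by_contra h'
  rw [Set.not_nonempty_iff_eq_empty] at h'
  exact absurd (c.strict ℓ h).2 (by simp [h'])

lemma lvlAux (c : SubsetChain ι) (i : ι) : ∃ ℓ, i ∉ c.K ℓ := ⟨c.m, by simp [c.last]⟩

open Classical in
/-- The level of an index `i`: the largest `ℓ` with `i ∈ K ℓ`. -/
def lvl (c : SubsetChain ι) (i : ι) : ℕ :=
  Nat.find (lvlAux c i) - 1

open Classical in
lemma lvl_find_pos (c : SubsetChain ι) (i : ι) : 1 ≤ Nat.find (lvlAux c i) := by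
  rcases Nat.eq_zero_or_pos (Nat.find (lvlAux c i)) with h | h
  · have := Nat.find_spec (lvlAux c i)
    rw [h, c.first] at this
    simp at this
  · exact h

open Classical in
lemma mem_K_iff_le_lvl (c : SubsetChain ι) (i : ι) (ℓ : ℕ) :
    i ∈ c.K ℓ ↔ ℓ ≤ lvl c i := by
  have hf := lvl_find_pos c i
  have hspec := Nat.find_spec (lvlAux c i)
  constructor
  · intro h
    by_contra hlt
    push_neg at hlt
    have hle : Nat.find (lvlAux c i) ≤ ℓ := by unfold lvl at hlt; omega
    exact hspec (c.antitone hle h)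
  · intro h
    have hlt : ℓ < Nat.find (lvlAux c i) := by unfold lvl at h; omega
    simpa using Nat.find_min (lvlAux c i) hlt

lemma lvl_lt_m (c : SubsetChain ι) (i : ι) : lvl c i < c.m := by
  have h : ¬ c.m ≤ lvl c i := fun h => by
    have := (mem_K_iff_le_lvl c i c.m).mpr h
    rw [c.last] at this
    exact this
  omega

/-- The level of a nonempty subset: the minimum level of its elements. -/
def lvlI (c : SubsetChain ι) (I : Set ι) : ℕ := sInf (lvl c '' I)

lemma lvlI_le (c : SubsetChain ι) {I : Set ι} {i : ι} (hi : i ∈ I) : lvlI c I ≤ lvl c i :=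
  Nat.sInf_le ⟨i, hi, rfl⟩

lemma exists_lvl_eq_lvlI (c : SubsetChain ι) {I : Set ι} (hI : I.Nonempty) :
    ∃ i ∈ I, lvl c i = lvlI c I := by
  obtain ⟨i, hi, h⟩ := Nat.sInf_mem (hI.image (lvl c))
  exact ⟨i, hi, h⟩

lemma I_subset_K_lvlI (c : SubsetChain ι) (I : Set ι) : I ⊆ c.K (lvlI c I) :=
  fun i hi => (mem_K_iff_le_lvl c i _).mpr (lvlI_le c hi)

lemma lvlI_K_eq (c : SubsetChain ι) {ℓ : ℕ} (h : ℓ < c.m) : lvlI c (c.K ℓ) = ℓ := by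
  apply le_antisymm
  · obtain ⟨i, hi⟩ : (c.K ℓ \ c.K (ℓ+1)).Nonempty := by
      rw [Set.diff_nonempty]
      exact fun hsub => (c.strict ℓ h).2 hsub
    have h1 : ℓ ≤ lvl c i := (mem_K_iff_le_lvl c i ℓ).mp hi.1
    have h2 : ¬ (ℓ + 1 ≤ lvl c i) := fun hh => hi.2 ((mem_K_iff_le_lvl c i _).mpr hh)
    have h3 : lvlI c (c.K ℓ) ≤ lvl c i := lvlI_le c hi.1
    omega
  · refine le_csInf ((c.nonempty_of_lt h).image (lvl c)) ?_
    rintro n ⟨i, hi, rfl⟩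
    exact (mem_K_iff_le_lvl c i ℓ).mp hi

end Chains

section Ptc

variable {ι : Type}

/-- The standard vector representing the `I`-component of the special point attached
to a chain `c` and scaling data `b`. -/
def vvec (c : SubsetChain ι) (b : ι → ℂ) (I : Set ι) : ↥I → ℂ :=
  fun i => if lvl c i.1 = lvlI c I then b i.1 else 0

lemma vvec_ne_zero (c : SubsetChain ι) {b : ι → ℂ} (hb : ∀ i, b i ≠ 0) {I : Set ι}
    (hI : I.Nonempty) : vvec c b I ≠ 0 := by
  obtain ⟨i, hi, he⟩ := exists_lvl_eq_lvlI c hI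
  intro h0
  have := congrFun h0 ⟨i, hi⟩
  simp [vvec, he] at this
  exact hb i this

/-- The special point of `P` attached to a chain `c` and scaling data `b`. -/
def ptc (c : SubsetChain ι) (b : ι → ℂ) (hb : ∀ i, b i ≠ 0) : PSp ι :=
  fun I => Projectivization.mk ℂ (vvec c b I.1) (vvec_ne_zero c hb I.2)

lemma pcoord_eq (p : PSp ι) {K : Set ι} (hK : K.Nonempty) {i : ι} (hi : i ∈ K) :
    pcoord ι p K i = (p ⟨K, hK⟩).rep ⟨i, hi⟩ := dif_pos ⟨hK, hi⟩

lemma mk_eq_mk_of_pointwise {α : Type} {v w : α → ℂ} {hv : v ≠ 0} {hw : w ≠ 0}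
    (a : ℂ) (h : ∀ x, v x = a * w x) :
    Projectivization.mk ℂ v hv = Projectivization.mk ℂ w hw :=
  (Projectivization.mk_eq_mk_iff' ℂ _ _ _ _).mpr ⟨a, funext fun x => by
    simp [Pi.smul_apply, smul_eq_mul, (h x).symm]⟩

lemma pcoord_ptc (c : SubsetChain ι) (b : ι → ℂ) (hb : ∀ i, b i ≠ 0) {K : Set ι}
    (hK : K.Nonempty) : ∃ a : ℂ, a ≠ 0 ∧ ∀ i (hi : i ∈ K),
      pcoord ι (ptc c b hb) K i = a * vvec c b K ⟨i, hi⟩ := by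
  obtain ⟨a, ha, hrep⟩ := rep_eq_smul_of_eq_mk (ptc c b hb ⟨K, hK⟩) _ _ rfl
  refine ⟨a, ha, fun i hi => ?_⟩
  rw [pcoord_eq _ hK hi, hrep]
  simp

lemma pcoord_ptc_eq_zero_iff (c : SubsetChain ι) (b : ι → ℂ) (hb : ∀ i, b i ≠ 0) {K : Set ι}
    (hK : K.Nonempty) {i : ι} (hi : i ∈ K) :
    pcoord ι (ptc c b hb) K i = 0 ↔ lvl c i ≠ lvlI c K := by
  obtain ⟨a, ha, h⟩ := pcoord_ptc c b hb hK
  rw [h i hi]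
  by_cases hl : lvl c i = lvlI c K <;> simp [vvec, hl, ha, hb i]

lemma chainK_ptc (c : SubsetChain ι) (b : ι → ℂ) (hb : ∀ i, b i ≠ 0) :
    ∀ ℓ, ℓ ≤ c.m → chainK ι (ptc c b hb) ℓ = c.K ℓ := by
  intro ℓ
  induction ℓ with
  | zero => intro _; rw [c.first]; rfl
  | succ ℓ ih =>
    intro hle
    have hℓ : ℓ < c.m := by omega
    have hK := ih (le_of_lt hℓ)
    show {k ∈ chainK ι (ptc c b hb) ℓ |
      pcoord ι (ptc c b hb) (chainK ι (ptc c b hb) ℓ) k = 0} = c.K (ℓ+1)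
    rw [hK]
    ext k
    simp only [Set.mem_setOf_eq]
    constructor
    · rintro ⟨hk, h0⟩
      rw [pcoord_ptc_eq_zero_iff c b hb (c.nonempty_of_lt hℓ) hk, lvlI_K_eq c hℓ] at h0
      have := (mem_K_iff_le_lvl c k ℓ).mp hk
      exact (mem_K_iff_le_lvl c k (ℓ+1)).mpr (by omega)
    · intro hk1
      have hk : k ∈ c.K ℓ := c.antitone (Nat.le_succ ℓ) hk1
      have hlv := (mem_K_iff_le_lvl c k (ℓ+1)).mp hk1
      refine ⟨hk, ?_⟩
      rw [pcoord_ptc_eq_zero_iff c b hb (c.nonempty_of_lt hℓ) hk, lvlI_K_eq c hℓ]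
      omega

lemma ptc_congr {c : SubsetChain ι} {b b' : ι → ℂ} {hb : ∀ i, b i ≠ 0} {hb' : ∀ i, b' i ≠ 0}
    (h : b = b') : ptc c b hb = ptc c b' hb' := by subst h; rfl

lemma ptc_smul (c : SubsetChain ι) (b : ι → ℂ) (hb : ∀ i, b i ≠ 0) (d : ℂ) (hd : d ≠ 0)
    (hb' : ∀ i, d * b i ≠ 0) : ptc c (fun i => d * b i) hb' = ptc c b hb := by
  funext I
  refine mk_eq_mk_of_pointwise d fun x => ?_
  simp only [vvec]
  split <;> simp

lemma act_ptc (t : ↥(torusSet ι)) (c : SubsetChain ι) (b : ι → ℂ) (hb : ∀ i, b i ≠ 0)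
    (hb' : ∀ i, t.1.rep i * b i ≠ 0) :
    act ι t (ptc c b hb) = ptc c (fun i => t.1.rep i * b i) hb' := by
  funext I
  obtain ⟨a, ha, hrep⟩ := rep_eq_smul_of_eq_mk (ptc c b hb I) _ _ rfl
  refine mk_eq_mk_of_pointwise a fun x => ?_
  rw [hrep]
  simp only [Pi.smul_apply, smul_eq_mul, vvec]
  split <;> ring

end Ptc

section Limit

open Filter Topology

variable {ι : Type} [Nonempty ι]

lemma funvec_ne_zero {u : ι → ℂ} (hu : ∀ i, u i ≠ 0) : u ≠ 0 := by
  intro h0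
  exact hu (Classical.arbitrary ι) (congrFun h0 _)

/-- Torus element attached to a vector with nonzero coordinates. -/
def torusOf (u : ι → ℂ) (hu : ∀ i, u i ≠ 0) : ↥(torusSet ι) :=
  ⟨Projectivization.mk ℂ u (funvec_ne_zero hu), by
    obtain ⟨a, ha, hrep⟩ := rep_mk_eq_smul u (funvec_ne_zero hu)
    intro i
    rw [hrep]
    simp only [Pi.smul_apply, smul_eq_mul]
    exact mul_ne_zero ha (hu i)⟩

lemma epsilon_tendsto : Tendsto (fun k : ℕ => Complex.ofReal (1 / (k + 1))) atTop (𝓝 0) := by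
  have := (Complex.continuous_ofReal.tendsto (0 : ℝ)).comp tendsto_one_div_add_atTop_nhds_zero_nat
  simpa only [Function.comp_def, Complex.ofReal_zero] using this

lemma ptc_mem_Yn (c : SubsetChain ι) (b : ι → ℂ) (hb : ∀ i, b i ≠ 0) :
    ptc c b hb ∈ Yn ι := by
  set ε : ℕ → ℂ := fun k => Complex.ofReal (1 / (k + 1)) with hεdef
  have hε : ∀ k, ε k ≠ 0 := by
    intro k
    simp only [hεdef, ne_eq, Complex.ofReal_eq_zero]
    positivity
  set u : ℕ → ι → ℂ := fun k i => b i * ε k ^ lvl c i with hudef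
  have hu : ∀ k i, u k i ≠ 0 := fun k i => mul_ne_zero (hb i) (pow_ne_zero _ (hε k))
  set τ : ℕ → ↥(torusSet ι) := fun k => torusOf (u k) (hu k) with hτdef
  have main : Tendsto (fun k => rho ι (τ k)) atTop (𝓝 (ptc c b hb)) := by
    rw [tendsto_pi_nhds]
    intro I
    set w : ℕ → ↥I.1 → ℂ := fun k i => b i.1 * ε k ^ (lvl c i.1 - lvlI c I.1) with hwdef
    have hw : ∀ k, w k ≠ 0 := by
      intro k h0
      obtain ⟨i0, hi0⟩ := I.2
      exact mul_ne_zero (hb i0) (pow_ne_zero _ (hε k)) (congrFun h0 ⟨i0, hi0⟩)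
    have hcomp : ∀ k, rho ι (τ k) I = Projectivization.mk ℂ (w k) (hw k) := by
      intro k
      obtain ⟨a, ha, hrep⟩ := rep_eq_smul_of_eq_mk ((τ k).1) _ _ rfl
      refine mk_eq_mk_of_pointwise (a * ε k ^ lvlI c I.1) fun x => ?_
      have hx : lvlI c I.1 ≤ lvl c x.1 := lvlI_le c x.2
      show (τ k).1.rep x.1 = _
      rw [hrep]
      simp only [Pi.smul_apply, smul_eq_mul, hudef, hwdef]
      have hpow : ε k ^ lvlI c I.1 * ε k ^ (lvl c x.1 - lvlI c I.1) = ε k ^ lvl c x.1 := by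
        rw [← pow_add, Nat.add_sub_cancel' hx]
      rw [← hpow]
      ring
    have h1 : Tendsto (fun k => (⟨w k, hw k⟩ : {v : ↥I.1 → ℂ // v ≠ 0})) atTop
        (𝓝 ⟨vvec c b I.1, vvec_ne_zero c hb I.2⟩) := by
      rw [tendsto_subtype_rng]
      show Tendsto (fun k => w k) atTop (𝓝 (vvec c b I.1))
      rw [tendsto_pi_nhds]
      intro x
      by_cases hx : lvl c x.1 = lvlI c I.1
      · have : ∀ k, w k x = b x.1 := by
          intro k
          simp [hwdef, hx]
        simp only [this]
        have : vvec c b I.1 x = b x.1 := by simp [vvec, hx]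
        rw [this]
        exact tendsto_const_nhds
      · have hd : lvl c x.1 - lvlI c I.1 ≠ 0 := by
          have := lvlI_le c x.2
          omega
        have : vvec c b I.1 x = 0 := by simp [vvec, hx]
        rw [this]
        have h2 : Tendsto (fun k => b x.1 * ε k ^ (lvl c x.1 - lvlI c I.1)) atTop (𝓝 0) := by
          have h3 := (epsilon_tendsto.pow (lvl c x.1 - lvlI c I.1)).const_mul (b x.1)
          simpa [zero_pow hd, hεdef] using h3
        exact h2
    have h2 := (continuous_projMk.tendsto
      (⟨vvec c b I.1, vvec_ne_zero c hb I.2⟩ : {v : ↥I.1 → ℂ // v ≠ 0})).comp h1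
    have h3 : Tendsto (fun k => Projectivization.mk ℂ (w k) (hw k)) atTop
        (𝓝 (ptc c b hb I)) := h2
    exact Tendsto.congr (fun k => (hcomp k).symm) h3
  exact mem_closure_of_tendsto main (Filter.Eventually.of_forall fun k => ⟨τ k, rfl⟩)

end Limit

section Structure

lemma eq_mk_of_minors {α : Type} (x : Projectivization ℂ (α → ℂ)) (w : α → ℂ) (hw : w ≠ 0)
    (h : ∀ a a', x.rep a * w a' = x.rep a' * w a) : x = Projectivization.mk ℂ w hw := by
  obtain ⟨a0, ha0⟩ := Function.ne_iff.mp hw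
  have ha0 : w a0 ≠ 0 := by simpa using ha0
  have hx0 : x.rep a0 ≠ 0 := by
    intro h0
    apply x.rep_nonzero
    funext a
    have h1 := h a a0
    rw [h0, zero_mul] at h1
    exact (mul_eq_zero.mp h1).resolve_right ha0
  rw [← Projectivization.mk_rep x]
  rw [Projectivization.mk_eq_mk_iff']
  refine ⟨x.rep a0 / w a0, ?_⟩
  funext a
  have h1 := h a a0
  simp only [Pi.smul_apply, smul_eq_mul]
  rw [div_mul_eq_mul_div, div_eq_iff ha0]
  linear_combination -h1

variable {ι : Type} [Fintype ι]

/-- The scaling data of a point: the nonvanishing coordinates along its chain. -/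
def bOf (p : PSp ι) : ι → ℂ := fun i => pcoord ι p (chainK ι p (lvl (cOf p) i)) i

lemma bOf_ne_zero (p : PSp ι) : ∀ i, bOf p i ≠ 0 := by
  intro i h0
  have h1 : i ∈ chainK ι p (lvl (cOf p) i) :=
    (mem_K_iff_le_lvl (cOf p) i _).mpr le_rfl
  have h2 : i ∉ (cOf p).K (lvl (cOf p) i + 1) := fun h => by
    have := (mem_K_iff_le_lvl (cOf p) i _).mp h; omega
  exact h2 ⟨h1, h0⟩

lemma eq_ptc_of_mem_Yn (p : PSp ι) (hp : p ∈ Yn ι) :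
    p = ptc (cOf p) (bOf p) (bOf_ne_zero p) := by
  have hZ := Yn_subset_Zset hp
  funext I
  set c := cOf p with hc
  have hJne : (c.K (lvlI c I.1)).Nonempty := by
    obtain ⟨i0, hi0, he⟩ := exists_lvl_eq_lvlI c I.2
    exact c.nonempty_of_lt (he ▸ lvl_lt_m c i0)
  set J : NES ι := ⟨c.K (lvlI c I.1), hJne⟩ with hJ
  have hIJ : I.1 ⊆ J.1 := I_subset_K_lvlI c I.1
  have hmin : ∀ (i i' : ↥I.1), (p I).rep i * (p J).rep ⟨i'.1, hIJ i'.2⟩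
      = (p I).rep i' * (p J).rep ⟨i.1, hIJ i.2⟩ := by
    intro i i'
    have h1 := Set.mem_iInter.mp hZ I
    have h2 := Set.mem_iInter.mp h1 J
    have h3 := Set.mem_iInter.mp h2 hIJ
    have h4 := Set.mem_iInter.mp h3 i
    have h5 := Set.mem_iInter.mp h4 i'
    have h6 := Set.mem_iInter.mp h5 (hIJ i.2)
    exact Set.mem_iInter.mp h6 (hIJ i'.2)
  have hvv : ∀ i : ↥I.1, vvec c (bOf p) I.1 i = (p J).rep ⟨i.1, hIJ i.2⟩ := by
    intro i
    by_cases hl : lvl c i.1 = lvlI c I.1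
    · have h1 : vvec c (bOf p) I.1 i = bOf p i.1 := by simp [vvec, hl]
      rw [h1]
      show pcoord ι p (chainK ι p (lvl c i.1)) i.1 = _
      have h2 : pcoord ι p (chainK ι p (lvl c i.1)) i.1
          = pcoord ι p (c.K (lvlI c I.1)) i.1 := by rw [hl]; rfl
      rw [h2, pcoord_eq p hJne (hIJ i.2)]
    · have h1 : vvec c (bOf p) I.1 i = 0 := by simp [vvec, hl]
      rw [h1]
      have hge : lvlI c I.1 ≤ lvl c i.1 := lvlI_le c i.2
      have hmem : i.1 ∈ c.K (lvlI c I.1 + 1) :=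
        (mem_K_iff_le_lvl c i.1 _).mpr (by omega)
      have h0 : pcoord ι p (c.K (lvlI c I.1)) i.1 = 0 := hmem.2
      rw [pcoord_eq p hJne (hIJ i.2)] at h0
      exact h0.symm
  have := eq_mk_of_minors (p I) (vvec c (bOf p) I.1) (vvec_ne_zero c (bOf_ne_zero p) I.2)
    (fun i i' => by rw [hvv i, hvv i']; exact hmin i i')
  exact this

lemma cOf_eq (c : SubsetChain ι) (p : PSp ι) (hp : ∀ ℓ ≤ c.m, chainK ι p ℓ = c.K ℓ) :
    cOf p = c := by
  have hK : (cOf p).K = chainK ι p := rfl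
  have hm : (cOf p).m = c.m := by
    rcases lt_trichotomy (cOf p).m c.m with h | h | h
    · have h1 := c.nonempty_of_lt h
      rw [← hp _ (le_of_lt h), ← congrFun hK _, (cOf p).beyond _ le_rfl] at h1
      exact absurd h1 Set.not_nonempty_empty
    · exact h
    · have h1 := (cOf p).nonempty_of_lt h
      rw [congrFun hK _, hp _ le_rfl, c.last] at h1
      exact absurd h1 Set.not_nonempty_empty
  refine SubsetChain.ext' hm ?_
  funext ℓ
  rw [hK]
  rcases le_or_gt ℓ c.m with h | h
  · exact hp ℓ h
  · rw [c.beyond ℓ (le_of_lt h), ← congrFun hK ℓ, (cOf p).beyond ℓ (by omega)]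

end Structure

/-- Each piece `O_{K₁,…,K_{m+1}}` is nonempty; `Y_n` is the disjoint union of the pieces
`O_{K₁,…,K_{m+1}}` over all chains `[n] = K₁ ⊋ ⋯ ⊋ K_{m+1} = ∅`; and sending a torus
orbit in `Y_n` to the common chain of its points gives a bijection between orbits and
chains (the orbit of any point of a piece is that piece, distinct chains give disjoint
pieces, and every chain occurs). -/
theorem stmt3 (n : ℕ) (hn : 1 ≤ n) :
    (∀ c : SubsetChain (Fin n), (Ochain (Fin n) c).Nonempty) ∧
    (Yn (Fin n) = ⋃ c : SubsetChain (Fin n), Ochain (Fin n) c) ∧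
    (∀ c c' : SubsetChain (Fin n),
      (Ochain (Fin n) c ∩ Ochain (Fin n) c').Nonempty → c = c') ∧
    (∀ c : SubsetChain (Fin n), ∀ p ∈ Ochain (Fin n) c,
      {q | ∃ t : ↥(torusSet (Fin n)), act (Fin n) t p = q} = Ochain (Fin n) c) := by
  have : Nonempty (Fin n) := ⟨⟨0, hn⟩⟩
  refine ⟨?_, ?_, ?_, ?_⟩
  · intro c
    exact ⟨ptc c (fun _ => 1) (fun _ => one_ne_zero),
      ptc_mem_Yn c _ _, fun ℓ hℓ => chainK_ptc c _ _ ℓ hℓ⟩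
  · ext p
    constructor
    · intro hp
      exact Set.mem_iUnion.mpr ⟨cOf p, hp, fun ℓ _ => rfl⟩
    · intro hp
      obtain ⟨c, hc⟩ := Set.mem_iUnion.mp hp
      exact hc.1
  · rintro c c' ⟨p, hc, hc'⟩
    rw [← cOf_eq c p hc.2, ← cOf_eq c' p hc'.2]
  · intro c p hp
    have hcp : cOf p = c := cOf_eq c p hp.2
    have hps : p = ptc c (bOf p) (bOf_ne_zero p) := by
      have := eq_ptc_of_mem_Yn p hp.1
      rwa [hcp] at this
    ext q
    constructor
    · rintro ⟨t, rfl⟩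
      rw [hps, act_ptc t c (bOf p) (bOf_ne_zero p)
        (fun i => mul_ne_zero (t.2 i) (bOf_ne_zero p i))]
      exact ⟨ptc_mem_Yn c _ _, fun ℓ hℓ => chainK_ptc c _ _ ℓ hℓ⟩
    · intro hq
      have hcq : cOf q = c := cOf_eq c q hq.2
      have hqs : q = ptc c (bOf q) (bOf_ne_zero q) := by
        have := eq_ptc_of_mem_Yn q hq.1
        rwa [hcq] at this
      have hdiv : ∀ i, bOf q i / bOf p i ≠ 0 :=
        fun i => div_ne_zero (bOf_ne_zero q i) (bOf_ne_zero p i)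
      set t := torusOf (fun i => bOf q i / bOf p i) hdiv with ht
      refine ⟨t, ?_⟩
      obtain ⟨a, ha, hrep⟩ := rep_eq_smul_of_eq_mk (t.1) _ _ rfl
      rw [hps, act_ptc t c (bOf p) (bOf_ne_zero p)
        (fun i => mul_ne_zero (t.2 i) (bOf_ne_zero p i)), hqs]
      have hfun : (fun i => t.1.rep i * bOf p i) = fun i => a * bOf q i := by
        funext i
        rw [hrep]
        simp only [Pi.smul_apply, smul_eq_mul]
        rw [mul_assoc, div_mul_cancel₀ _ (bOf_ne_zero p i)]
      exact (ptc_congr hfun).trans (ptc_smul c (bOf q) (bOf_ne_zero q) a ha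
        (fun i => mul_ne_zero ha (bOf_ne_zero q i)))
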